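/- Let R > 1 be real, n ≥ 0 an integer, and g : ℂ → ℂ a function that is continuous on the circle {|ζ| = R} and satisfies g(−ζ) = g(ζ) for all ζ with |ζ| = R. Then ∮_{|ζ|=R} g(ζ) / ((ζ−1)^{1/2}(ζ+1)^{1/2}·(ζ+1)^{n+1}) dζ = (−1)^{n+1} · ∮_{|ζ|=R} g(ζ) / ((ζ−1)^{1/2}(ζ+1)^{1/2}·(ζ−1)^{n+1}) dζ, where both integrals are over the positively oriented circle of radius R centered at 0 and each square root is the principal complex square root. -/

import Mathlib

open Complex Real

private lemma log_neg_sub (x : ℂ) (h : 0 < x.im ∨ x.im = 0 ∧ x.re < 0) :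
    Complex.log (-x) = Complex.log x - (Real.pi : ℂ) * Complex.I := by
  have harg : Complex.arg (-x) = Complex.arg x - Real.pi :=
    Complex.arg_neg_eq_arg_sub_pi_iff.2 h
  apply Complex.ext
  · simp [Complex.log_re]
  · simp [Complex.log_im, harg]

private lemma log_neg_add (x : ℂ) (h : x.im < 0 ∨ x.im = 0 ∧ 0 < x.re) :
    Complex.log (-x) = Complex.log x + (Real.pi : ℂ) * Complex.I := by
  have harg : Complex.arg (-x) = Complex.arg x + Real.pi :=
    Complex.arg_neg_eq_arg_add_pi_iff.2 h
  apply Complex.ext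
  · simp [Complex.log_re]
  · simp [Complex.log_im, harg]

private lemma branch_neg (ζ : ℂ) (hζ : 1 < ‖ζ‖) :
    (-ζ - 1) ^ (1 / 2 : ℂ) * (-ζ + 1) ^ (1 / 2 : ℂ)
      = -((ζ - 1) ^ (1 / 2 : ℂ) * (ζ + 1) ^ (1 / 2 : ℂ)) := by
  have h1 : ζ - 1 ≠ 0 := by
    intro h; rw [sub_eq_zero] at h; rw [h] at hζ; simp at hζ
  have h2 : ζ + 1 ≠ 0 := by
    intro h
    have : ζ = -1 := by linear_combination h
    rw [this] at hζ; simp at hζ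
  have h1' : -ζ + 1 ≠ 0 := fun h => h1 (by linear_combination -h)
  have h2' : -ζ - 1 ≠ 0 := fun h => h2 (by linear_combination -h)
  have e1 : -ζ - 1 = -(ζ + 1) := by ring
  have e2 : -ζ + 1 = -(ζ - 1) := by ring
  have key : ∃ ε : ℂ, (ε = 1 ∨ ε = -1) ∧
      Complex.log (-ζ - 1) = Complex.log (ζ + 1) + ε * (Real.pi : ℂ) * Complex.I ∧
      Complex.log (-ζ + 1) = Complex.log (ζ - 1) + ε * (Real.pi : ℂ) * Complex.I := by
    rcases lt_trichotomy ζ.im 0 with him | him | him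
    · refine ⟨1, Or.inl rfl, ?_, ?_⟩
      · rw [e1, log_neg_add _ (Or.inl (by simp [him]))]; ring
      · rw [e2, log_neg_add _ (Or.inl (by simp [him]))]; ring
    · have habs : 1 < |ζ.re| := by
        have hre : ζ = (ζ.re : ℂ) := Complex.ext rfl (by simp [him])
        rw [hre] at hζ; simpa using hζ
      rcases abs_cases ζ.re with ⟨he, _⟩ | ⟨he, _⟩
      · have hgt : 1 < ζ.re := by rw [he] at habs; exact habs
        refine ⟨1, Or.inl rfl, ?_, ?_⟩
        · rw [e1, log_neg_add _ (Or.inr ⟨by simp [him], by simp; linarith⟩)]; ring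
        · rw [e2, log_neg_add _ (Or.inr ⟨by simp [him], by simp; linarith⟩)]; ring
      · have hlt : ζ.re < -1 := by rw [he] at habs; linarith
        refine ⟨-1, Or.inr rfl, ?_, ?_⟩
        · rw [e1, log_neg_sub _ (Or.inr ⟨by simp [him], by simp; linarith⟩)]; ring
        · rw [e2, log_neg_sub _ (Or.inr ⟨by simp [him], by simp; linarith⟩)]; ring
    · refine ⟨-1, Or.inr rfl, ?_, ?_⟩
      · rw [e1, log_neg_sub _ (Or.inl (by simp [him]))]; ring
      · rw [e2, log_neg_sub _ (Or.inl (by simp [him]))]; ring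
  obtain ⟨ε, hε, hl1, hl2⟩ := key
  have hexp : ∀ X : ℂ, Complex.exp (X + ε * (Real.pi : ℂ) * Complex.I) = -Complex.exp X := by
    intro X
    rcases hε with rfl | rfl
    · rw [one_mul, Complex.exp_add, Complex.exp_pi_mul_I]; ring
    · rw [Complex.exp_add,
        show (-1 : ℂ) * (Real.pi : ℂ) * Complex.I = -((Real.pi : ℂ) * Complex.I) by ring,
        Complex.exp_neg, Complex.exp_pi_mul_I]
      norm_num
  rw [Complex.cpow_def_of_ne_zero h2', Complex.cpow_def_of_ne_zero h1',
    Complex.cpow_def_of_ne_zero h1, Complex.cpow_def_of_ne_zero h2,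
    ← Complex.exp_add, ← Complex.exp_add, hl1, hl2,
    show (Complex.log (ζ + 1) + ε * (Real.pi : ℂ) * Complex.I) * (1 / 2)
        + (Complex.log (ζ - 1) + ε * (Real.pi : ℂ) * Complex.I) * (1 / 2)
      = (Complex.log (ζ - 1) * (1 / 2) + Complex.log (ζ + 1) * (1 / 2))
        + ε * (Real.pi : ℂ) * Complex.I by ring, hexp]

theorem circle_integral_even_symmetry (R : ℝ) (hR : 1 < R) (n : ℕ) (g : ℂ → ℂ)
    (hgc : ContinuousOn g (Metric.sphere (0 : ℂ) R))
    (hge : ∀ ζ : ℂ, ‖ζ‖ = R → g (-ζ) = g ζ) :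
    (∮ ζ in C(0, R), g ζ /
        ((ζ - 1) ^ (1 / 2 : ℂ) * (ζ + 1) ^ (1 / 2 : ℂ) * (ζ + 1) ^ (n + 1)))
      = (-1) ^ (n + 1) *
        ∮ ζ in C(0, R), g ζ /
          ((ζ - 1) ^ (1 / 2 : ℂ) * (ζ + 1) ^ (1 / 2 : ℂ) * (ζ - 1) ^ (n + 1)) := by
  set fp : ℂ → ℂ := fun ζ =>
    g ζ / ((ζ - 1) ^ (1 / 2 : ℂ) * (ζ + 1) ^ (1 / 2 : ℂ) * (ζ + 1) ^ (n + 1)) with hfp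
  set fm : ℂ → ℂ := fun ζ =>
    g ζ / ((ζ - 1) ^ (1 / 2 : ℂ) * (ζ + 1) ^ (1 / 2 : ℂ) * (ζ - 1) ^ (n + 1)) with hfm
  -- pointwise symmetry
  have key : ∀ ζ : ℂ, ‖ζ‖ = R → fp (-ζ) = (-1 : ℂ) ^ n * fm ζ := by
    intro ζ hζ
    have habs : 1 < ‖ζ‖ := hζ ▸ hR
    have h1 : ζ - 1 ≠ 0 := by
      intro h; rw [sub_eq_zero] at h; rw [h] at habs; simp at habs
    have hb := branch_neg ζ habs
    have hpow : (-ζ + 1) ^ (n + 1) = (-1 : ℂ) ^ (n + 1) * (ζ - 1) ^ (n + 1) := by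
      rw [show -ζ + 1 = -(ζ - 1) by ring, neg_pow]
    simp only [hfp, hfm]
    rw [hge ζ hζ, hb, hpow,
      show -((ζ - 1) ^ (1 / 2 : ℂ) * (ζ + 1) ^ (1 / 2 : ℂ))
          * ((-1 : ℂ) ^ (n + 1) * (ζ - 1) ^ (n + 1))
        = (-1 : ℂ) ^ n * ((ζ - 1) ^ (1 / 2 : ℂ) * (ζ + 1) ^ (1 / 2 : ℂ) * (ζ - 1) ^ (n + 1))
        by rw [pow_succ]; ring]
    rcases Nat.even_or_odd n with h | h
    · rw [h.neg_one_pow]; simp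
    · rw [h.neg_one_pow, neg_one_mul, div_neg, neg_one_mul]
  have hmap : ∀ θ : ℝ, circleMap 0 R (θ + Real.pi) = -circleMap 0 R θ := by
    intro θ
    simp only [circleMap, zero_add, Complex.ofReal_add, add_mul, Complex.exp_add,
      Complex.exp_pi_mul_I]
    ring
  set F : ℝ → ℂ := fun θ => deriv (circleMap 0 R) θ • fp (circleMap 0 R θ) with hF
  have hper : Function.Periodic F (2 * Real.pi) := fun θ => by
    simp [hF, deriv_circleMap, periodic_circleMap 0 R θ]
  have hRpos : (0 : ℝ) < R := lt_trans one_pos hR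
  calc (∮ ζ in C(0, R), fp ζ) = ∫ θ in (0:ℝ)..2 * Real.pi, F θ := rfl
    _ = ∫ θ in Real.pi..Real.pi + 2 * Real.pi, F θ := by
        have := hper.intervalIntegral_add_eq Real.pi 0
        rw [zero_add] at this
        exact this.symm
    _ = ∫ θ in (0:ℝ)..2 * Real.pi, F (θ + Real.pi) := by
        have := intervalIntegral.integral_comp_add_right (a := (0:ℝ)) (b := 2 * Real.pi)
          F Real.pi
        rw [zero_add, add_comm (2 * Real.pi) Real.pi] at this
        exact this.symm
    _ = ∫ θ in (0:ℝ)..2 * Real.pi,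
          ((-1 : ℂ) ^ (n + 1)) • (deriv (circleMap 0 R) θ • fm (circleMap 0 R θ)) := by
        apply intervalIntegral.integral_congr
        intro θ _
        have hc : ‖circleMap 0 R θ‖ = R := by
          simp [norm_circleMap_zero, abs_of_pos hRpos]
        simp only [hF, deriv_circleMap, hmap θ, key (circleMap 0 R θ) hc, smul_eq_mul]
        rw [pow_succ]
        ring
    _ = (-1 : ℂ) ^ (n + 1) * ∮ ζ in C(0, R), fm ζ := by
        rw [intervalIntegral.integral_smul, smul_eq_mul]
        rfl
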